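/- Let X be a real Banach space with dual X*, and Φ : X → ℝ ∪ {+∞} proper, lsc, convex. For ε ≥ 0 and x ∈ dom Φ, the ε-subdifferential is ∂_ε Φ(x) := {x* ∈ X* : ⟨x*, u − x⟩ ≤ Φ(u) − Φ(x) + ε for all u ∈ X}. Then for every ε > 0 and v ∈ X, Φ'_ε(x; v) = sup { ⟨x*, v⟩ : x* ∈ ∂_ε Φ(x) }, where Φ'_ε(x; v) := inf_{t>0}(Φ(x+tv) − Φ(x) + ε)/t. -/

import Mathlib

set_option maxHeartbeats 1000000

open Set Topology Filter

/-- Directional ε-derivative `Φ'_ε(x;v) = inf_{t>0} (Φ(x+tv) − Φ(x) + ε)/t`, where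
`c = Φ(x)` is the (finite) real value of `Φ` at `x`. -/
noncomputable def dirDeriv {X : Type*} [NormedAddCommGroup X] [NormedSpace ℝ X]
    (Φ : X → EReal) (x v : X) (c : ℝ) (ε : ℝ) : EReal :=
  ⨅ t ∈ Set.Ioi (0 : ℝ), (((t⁻¹ : ℝ) : EReal) * Φ (x + t • v) + (((ε - c) / t : ℝ) : EReal))

/-- The ε-subdifferential of `Φ` at `x`:
`{x* : ⟨x*, u − x⟩ ≤ Φ(u) − Φ(x) + ε for all u}`, in the additive form
`Φ(x) + ⟨x*, u − x⟩ ≤ Φ(u) + ε`. -/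
def SubdiffAt {X : Type*} [NormedAddCommGroup X] [NormedSpace ℝ X]
    (Φ : X → EReal) (x : X) (ε : ℝ) : Set (X →L[ℝ] ℝ) :=
  {p | ∀ u : X, Φ x + ((p (u - x) : ℝ) : EReal) ≤ Φ u + ((ε : ℝ) : EReal)}

section Helpers

variable {X : Type*} [NormedAddCommGroup X] [NormedSpace ℝ X]

lemma ereal_eq_coe_of_le_coe {a : EReal} (h : a ≠ ⊥) {b : ℝ} (h2 : a ≤ (b : EReal)) :
    ∃ A : ℝ, a = (A : EReal) ∧ A ≤ b := by
  induction a using EReal.rec with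
  | bot => exact absurd rfl h
  | coe A => exact ⟨A, rfl, EReal.coe_le_coe_iff.1 h2⟩
  | top => exact absurd h2 (by simp)

lemma ereal_le_real_of_forall {a : EReal} {s : ℝ}
    (h : ∀ δ : ℝ, 0 < δ → a ≤ ((s + δ : ℝ) : EReal)) : a ≤ (s : EReal) := by
  induction a using EReal.rec with
  | bot => exact bot_le
  | coe a =>
    refine EReal.coe_le_coe_iff.2 (le_of_forall_pos_le_add fun δ hδ => ?_)
    exact EReal.coe_le_coe_iff.1 (h δ hδ)
  | top => exact absurd (h 1 one_pos) (not_le.2 (EReal.coe_lt_top _))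

variable (Φ : X → EReal) (x : X) (c ε : ℝ)

lemma dirDeriv_le_coe_iff (hbot : ∀ z, Φ z ≠ ⊥) (w : X) (s : ℝ) :
    dirDeriv Φ x w c ε ≤ (s : EReal) ↔
      ∀ δ : ℝ, 0 < δ → ∃ t : ℝ, 0 < t ∧
        Φ (x + t • w) ≤ ((c - ε + t * (s + δ) : ℝ) : EReal) := by
  constructor
  · intro h δ hδ
    have hlt : dirDeriv Φ x w c ε < ((s + δ : ℝ) : EReal) :=
      h.trans_lt (by exact_mod_cast lt_add_of_pos_right s hδ)
    rw [dirDeriv] at hlt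
    simp only [iInf_lt_iff] at hlt
    obtain ⟨t, ht, hterm⟩ := hlt
    rw [Set.mem_Ioi] at ht
    refine ⟨t, ht, ?_⟩
    rcases eq_or_ne (Φ (x + t • w)) ⊤ with htop | htop
    · rw [htop, EReal.coe_mul_top_of_pos (by positivity), EReal.top_add_coe] at hterm
      exact absurd hterm (by simp)
    · have hA : Φ (x + t • w) = ((Φ (x + t • w)).toReal : EReal) :=
        (EReal.coe_toReal htop (hbot _)).symm
      set A := (Φ (x + t • w)).toReal with hAdef
      rw [hA] at hterm ⊢
      rw [show ((t⁻¹ : ℝ) : EReal) * ((A : ℝ) : EReal) + (((ε - c) / t : ℝ) : EReal)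
          = ((t⁻¹ * A + (ε - c) / t : ℝ) : EReal) by push_cast; ring] at hterm
      rw [EReal.coe_lt_coe_iff] at hterm
      rw [EReal.coe_le_coe_iff]
      have h3 := mul_lt_mul_of_pos_left hterm ht
      rw [mul_add, mul_inv_cancel_left₀ ht.ne', mul_div_cancel₀ _ ht.ne'] at h3
      linarith
  · intro h
    apply ereal_le_real_of_forall
    intro δ hδ
    obtain ⟨t, ht, hΦ⟩ := h δ hδ
    obtain ⟨A, hA, hAle⟩ := ereal_eq_coe_of_le_coe (hbot _) hΦ
    calc dirDeriv Φ x w c ε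
        ≤ ((t⁻¹ : ℝ) : EReal) * Φ (x + t • w) + (((ε - c) / t : ℝ) : EReal) := by
          rw [dirDeriv]
          exact iInf₂_le t (Set.mem_Ioi.2 ht)
      _ = ((t⁻¹ * A + (ε - c) / t : ℝ) : EReal) := by rw [hA]; push_cast; ring_nf
      _ ≤ ((s + δ : ℝ) : EReal) := by
          rw [EReal.coe_le_coe_iff, inv_mul_eq_div, ← add_div, div_le_iff₀ ht]
          linarith

end Helpers

section Two
variable {X : Type*} [NormedAddCommGroup X] [NormedSpace ℝ X]
variable (Φ : X → EReal) (x : X) (c ε : ℝ)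

def epiQ : Set (X × ℝ) := {p | dirDeriv Φ x p.1 c ε ≤ ((p.2 : ℝ) : EReal)}

variable {Φ x c ε}

lemma epiQ_cone (hbot : ∀ z, Φ z ≠ ⊥) {w : X} {s : ℝ}
    (h : (w, s) ∈ epiQ Φ x c ε) {l : ℝ} (hl : 0 < l) : (l • w, l * s) ∈ epiQ Φ x c ε := by
  rw [epiQ, Set.mem_setOf_eq, dirDeriv_le_coe_iff Φ x c ε hbot] at h ⊢
  intro δ hδ
  obtain ⟨t, ht, hΦ⟩ := h (δ / l) (by positivity)
  refine ⟨t / l, by positivity, ?_⟩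
  rw [show (t / l) • (l • w) = t • w by rw [smul_smul, div_mul_cancel₀ t hl.ne']]
  rw [show c - ε + t / l * (l * s + δ) = c - ε + t * (s + δ / l) by linear_combination s * div_mul_cancel₀ t hl.ne']
  exact hΦ

lemma dirDeriv_zero_nonneg (hbot : ∀ z, Φ z ≠ ⊥) (hx : Φ x = (c : EReal)) (hε : 0 < ε) :
    (0 : EReal) ≤ dirDeriv Φ x (0 : X) c ε := by
  refine le_iInf₂ fun t ht => ?_
  rw [Set.mem_Ioi] at ht
  rw [smul_zero, add_zero, hx]
  have harith : t⁻¹ * c + (ε - c) / t = ε / t := by field_simp; ring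
  rw [← EReal.coe_mul, ← EReal.coe_add, harith]
  exact_mod_cast le_of_lt (by positivity)

lemma dirDeriv_zero_le (hbot : ∀ z, Φ z ≠ ⊥) (hx : Φ x = (c : EReal)) (hε : 0 < ε) :
    dirDeriv Φ x (0 : X) c ε ≤ (0 : EReal) := by
  have h0 : ((0 : ℝ) : EReal) = (0 : EReal) := rfl
  rw [← h0, dirDeriv_le_coe_iff Φ x c ε hbot]
  intro δ hδ
  refine ⟨ε / δ, by positivity, ?_⟩
  rw [smul_zero, add_zero, hx, EReal.coe_le_coe_iff, zero_add, div_mul_cancel₀ _ hδ.ne']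
  linarith

/-- membership in the subdifferential from domination on epiQ -/
lemma mem_subdiffAt_of (hbot : ∀ z, Φ z ≠ ⊥) (hx : Φ x = (c : EReal)) {p : X →L[ℝ] ℝ}
    (h : ∀ w : X, ∀ s : ℝ, (w, s) ∈ epiQ Φ x c ε → p w ≤ s) : p ∈ SubdiffAt Φ x ε := by
  intro u
  rcases eq_or_ne (Φ u) ⊤ with htop | htop
  · rw [htop, EReal.top_add_coe]; exact le_top
  · have hA : Φ u = ((Φ u).toReal : EReal) := (EReal.coe_toReal htop (hbot _)).symm
    set A := (Φ u).toReal
    have hmem : (u - x, A - c + ε) ∈ epiQ Φ x c ε := by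
      rw [epiQ, Set.mem_setOf_eq, dirDeriv]
      calc ⨅ t ∈ Set.Ioi (0:ℝ), (((t⁻¹:ℝ):EReal) * Φ (x + t • (u - x)) + (((ε - c)/t : ℝ):EReal))
          ≤ (((1:ℝ)⁻¹:ℝ):EReal) * Φ (x + (1:ℝ) • (u - x)) + (((ε - c)/1 : ℝ):EReal) :=
            iInf₂_le 1 (Set.mem_Ioi.2 one_pos)
        _ = ((A - c + ε : ℝ) : EReal) := by
            rw [one_smul, add_sub_cancel, hA, ← EReal.coe_mul, ← EReal.coe_add,
              EReal.coe_eq_coe_iff]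
            ring
    have := h _ _ hmem
    rw [hx, hA]
    exact_mod_cast by linarith

/-- Easy direction -/
lemma coe_apply_le_dirDeriv (hbot : ∀ z, Φ z ≠ ⊥) (hx : Φ x = (c : EReal)) {p : X →L[ℝ] ℝ}
    (hp : p ∈ SubdiffAt Φ x ε) (w : X) : ((p w : ℝ) : EReal) ≤ dirDeriv Φ x w c ε := by
  refine le_iInf₂ fun t ht => ?_
  rw [Set.mem_Ioi] at ht
  have h1 := hp (x + t • w)
  rw [hx, show x + t • w - x = t • w by abel, map_smul, smul_eq_mul] at h1
  rcases eq_or_ne (Φ (x + t • w)) ⊤ with htop | htop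
  · rw [htop, EReal.coe_mul_top_of_pos (by positivity), EReal.top_add_coe]; exact le_top
  · have hA : Φ (x + t • w) = ((Φ (x + t • w)).toReal : EReal) :=
      (EReal.coe_toReal htop (hbot _)).symm
    set A := (Φ (x + t • w)).toReal
    rw [hA] at h1 ⊢
    have h2 : c + t * p w ≤ A + ε := by exact_mod_cast h1
    rw [show ((t⁻¹:ℝ):EReal) * ((A:ℝ):EReal) + (((ε - c)/t : ℝ):EReal)
        = ((t⁻¹ * A + (ε - c)/t : ℝ):EReal) by push_cast; ring]
    rw [EReal.coe_le_coe_iff, inv_mul_eq_div, ← add_div, le_div_iff₀ ht]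
    linarith

end Two

section Three
variable {X : Type*} [NormedAddCommGroup X] [NormedSpace ℝ X]
variable {Φ : X → EReal} {x : X} {c ε : ℝ}

lemma epiQ_convex (hbot : ∀ z, Φ z ≠ ⊥)
    (hconv : ∀ x y : X, ∀ t : ℝ, 0 ≤ t → t ≤ 1 →
      Φ (t • x + (1 - t) • y) ≤ ((t : ℝ) : EReal) * Φ x + (((1 - t : ℝ)) : EReal) * Φ y) :
    Convex ℝ (epiQ Φ x c ε) := by
  rintro ⟨w₁, s₁⟩ h₁ ⟨w₂, s₂⟩ h₂ θ τ hθ hτ hθτ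
  rw [epiQ, Set.mem_setOf_eq, dirDeriv_le_coe_iff Φ x c ε hbot] at h₁ h₂
  show dirDeriv Φ x (θ • w₁ + τ • w₂) c ε ≤ ((θ * s₁ + τ * s₂ : ℝ) : EReal)
  rw [dirDeriv_le_coe_iff Φ x c ε hbot]
  intro δ hδ
  obtain ⟨t₁, ht₁, hΦ₁⟩ := h₁ δ hδ
  obtain ⟨t₂, ht₂, hΦ₂⟩ := h₂ δ hδ
  obtain ⟨A₁, hA₁, hA₁le⟩ := ereal_eq_coe_of_le_coe (hbot _) hΦ₁
  obtain ⟨A₂, hA₂, hA₂le⟩ := ereal_eq_coe_of_le_coe (hbot _) hΦ₂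
  have hden : 0 < θ / t₁ + τ / t₂ := by
    rcases hθ.lt_or_eq with hθ' | hθ'
    · have : 0 < θ / t₁ := by positivity
      have : 0 ≤ τ / t₂ := by positivity
      linarith
    · have hτ' : 0 < τ := by rw [← hθ'] at hθτ; linarith
      have : 0 < τ / t₂ := by positivity
      have : 0 ≤ θ / t₁ := by positivity
      linarith
  set t : ℝ := (θ / t₁ + τ / t₂)⁻¹ with htdef
  have htpos : 0 < t := by positivity
  set l₁ : ℝ := t * θ / t₁ with hl₁def
  set l₂ : ℝ := t * τ / t₂ with hl₂def
  have hl₁ : 0 ≤ l₁ := by positivity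
  have hl₂ : 0 ≤ l₂ := by positivity
  have hlsum : l₁ + l₂ = 1 := by
    rw [hl₁def, hl₂def, mul_div_assoc, mul_div_assoc, ← mul_add, htdef]
    exact inv_mul_cancel₀ hden.ne'
  have hl₁t : l₁ * t₁ = t * θ := div_mul_cancel₀ _ ht₁.ne'
  have hl₂t : l₂ * t₂ = t * τ := div_mul_cancel₀ _ ht₂.ne'
  refine ⟨t, htpos, ?_⟩
  have hpoint : l₁ • (x + t₁ • w₁) + (1 - l₁) • (x + t₂ • w₂)
      = x + t • (θ • w₁ + τ • w₂) := by
    have h12 : (1 : ℝ) - l₁ = l₂ := by linarith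
    rw [h12, smul_add, smul_add, smul_smul, smul_smul, hl₁t, hl₂t, smul_add, smul_smul,
      smul_smul]
    rw [show l₁ • x + (t * θ) • w₁ + (l₂ • x + (t * τ) • w₂)
        = (l₁ • x + l₂ • x) + ((t * θ) • w₁ + (t * τ) • w₂) by abel]
    rw [← add_smul, hlsum, one_smul]
  have hkey := hconv (x + t₁ • w₁) (x + t₂ • w₂) l₁ hl₁ (by linarith)
  rw [hpoint, hA₁, hA₂] at hkey
  have h12 : (1 : ℝ) - l₁ = l₂ := by linarith
  rw [h12, ← EReal.coe_mul, ← EReal.coe_mul, ← EReal.coe_add] at hkey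
  refine hkey.trans ?_
  rw [EReal.coe_le_coe_iff]
  have hb₁ : l₁ * A₁ ≤ l₁ * (c - ε + t₁ * (s₁ + δ)) := mul_le_mul_of_nonneg_left hA₁le hl₁
  have hb₂ : l₂ * A₂ ≤ l₂ * (c - ε + t₂ * (s₂ + δ)) := mul_le_mul_of_nonneg_left hA₂le hl₂
  have hexp : l₁ * (c - ε + t₁ * (s₁ + δ)) + l₂ * (c - ε + t₂ * (s₂ + δ))
      = c - ε + t * (θ * s₁ + τ * s₂ + δ) := by
    have e1 : l₁ * (t₁ * (s₁ + δ)) = t * θ * (s₁ + δ) := by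
      rw [← mul_assoc, hl₁t]
    have e2 : l₂ * (t₂ * (s₂ + δ)) = t * τ * (s₂ + δ) := by
      rw [← mul_assoc, hl₂t]
    have e3 : θ + τ = 1 := hθτ
    linear_combination (c - ε) * hlsum + e1 + e2 + t * δ * e3
  linarith
end Three

section Four
variable {X : Type*} [NormedAddCommGroup X] [NormedSpace ℝ X]
variable {Φ : X → EReal} {x : X} {c ε : ℝ}

lemma lsc_seq_bound (hlsc : LowerSemicontinuous Φ) {z : ℕ → X} {z₀ : X} {a : ℕ → ℝ} {A : ℝ}
    (hz : Tendsto z atTop (𝓝 z₀)) (ha : Tendsto a atTop (𝓝 A))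
    (h : ∀ n, Φ (z n) ≤ ((a n : ℝ) : EReal)) : Φ z₀ ≤ (A : EReal) := by
  apply ereal_le_real_of_forall
  intro δ hδ
  by_contra hc
  push_neg at hc
  have h1 : ∀ᶠ y in 𝓝 z₀, ((A + δ : ℝ) : EReal) < Φ y := hlsc z₀ _ hc
  have h2 := hz.eventually h1
  have h3 : ∀ᶠ n in atTop, a n < A + δ :=
    ha.eventually_lt_const (lt_add_of_pos_right A hδ)
  obtain ⟨n, hn2, hn3⟩ := (h2.and h3).exists
  exact absurd ((h n).trans_lt (by exact_mod_cast hn3)) (not_lt.2 hn2.le)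

lemma epiQ_closed (hbot : ∀ z, Φ z ≠ ⊥)
    (hconv : ∀ x y : X, ∀ t : ℝ, 0 ≤ t → t ≤ 1 →
      Φ (t • x + (1 - t) • y) ≤ ((t : ℝ) : EReal) * Φ x + (((1 - t : ℝ)) : EReal) * Φ y)
    (hlsc : LowerSemicontinuous Φ) (hx : Φ x = (c : EReal)) (hε : 0 < ε) :
    IsClosed (epiQ Φ x c ε) := by
  refine IsSeqClosed.isClosed ?_
  intro P p hP hlim
  have hw : Tendsto (fun n => (P n).1) atTop (𝓝 p.1) := (continuous_fst.tendsto p).comp hlim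
  have hs : Tendsto (fun n => (P n).2) atTop (𝓝 p.2) := (continuous_snd.tendsto p).comp hlim
  have hchoice : ∀ n : ℕ, ∃ t : ℝ, 0 < t ∧
      Φ (x + t • (P n).1) ≤ ((c - ε + t * ((P n).2 + 1/((n:ℝ)+1)) : ℝ) : EReal) := fun n =>
    (dirDeriv_le_coe_iff Φ x c ε hbot _ _).1 (hP n) (1/((n:ℝ)+1)) (by positivity)
  choose T hT hTΦ using hchoice
  show dirDeriv Φ x p.1 c ε ≤ ((p.2 : ℝ) : EReal)
  rw [dirDeriv_le_coe_iff Φ x c ε hbot]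
  intro δ hδ
  set σ := ε / δ with hσdef
  have hσ : 0 < σ := by positivity
  have hδn : Tendsto (fun n : ℕ => 1/((n:ℝ)+1)) atTop (𝓝 0) :=
    tendsto_one_div_add_atTop_nhds_zero_nat
  by_cases hfreq : ∃ᶠ n in atTop, σ ≤ T n
  · obtain ⟨φ, hφmono, hφ⟩ := extraction_of_frequently_atTop hfreq
    have hφtop : Tendsto φ atTop atTop := hφmono.tendsto_atTop
    have hbound : ∀ n, Φ (x + σ • (P (φ n)).1)
        ≤ ((c + σ * ((P (φ n)).2 + 1/((φ n : ℝ)+1)) : ℝ) : EReal) := by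
      intro n
      set m := φ n with hm
      set θ := σ / T m with hθdef
      have hθpos : 0 < θ := div_pos hσ (hT m)
      have hθle : θ ≤ 1 := by rw [hθdef, div_le_one (hT m)]; exact hφ n
      obtain ⟨A, hA, hAle⟩ := ereal_eq_coe_of_le_coe (hbot _) (hTΦ m)
      have hkey := hconv (x + T m • (P m).1) x θ hθpos.le hθle
      have hpoint : θ • (x + T m • (P m).1) + (1 - θ) • x = x + σ • (P m).1 := by
        rw [smul_add, smul_smul, hθdef, div_mul_cancel₀ _ (hT m).ne', ← hθdef]
        rw [show θ • x + σ • (P m).1 + (1-θ) • x = (θ + (1-θ)) • x + σ • (P m).1 by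
          rw [add_smul]; abel]
        norm_num
      rw [hpoint, hA, hx, ← EReal.coe_mul, ← EReal.coe_mul, ← EReal.coe_add] at hkey
      refine hkey.trans ?_
      rw [EReal.coe_le_coe_iff]
      have h1 : θ * A ≤ θ * (c - ε + T m * ((P m).2 + 1/((m:ℝ)+1))) :=
        mul_le_mul_of_nonneg_left hAle hθpos.le
      have h2 : θ * (T m * ((P m).2 + 1/((m:ℝ)+1))) = σ * ((P m).2 + 1/((m:ℝ)+1)) := by
        rw [← mul_assoc, hθdef, div_mul_cancel₀ _ (hT m).ne']
      nlinarith [hθpos, hε, hθle]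
    have hz : Tendsto (fun n => x + σ • (P (φ n)).1) atTop (𝓝 (x + σ • p.1)) :=
      tendsto_const_nhds.add ((hw.comp hφtop).const_smul σ)
    have ha : Tendsto (fun n => c + σ * ((P (φ n)).2 + 1/((φ n : ℝ)+1))) atTop
        (𝓝 (c + σ * (p.2 + 0))) :=
      tendsto_const_nhds.add (((hs.comp hφtop).add (hδn.comp hφtop)).const_mul σ)
    have hfin := lsc_seq_bound hlsc hz ha hbound
    refine ⟨σ, hσ, hfin.trans ?_⟩
    rw [EReal.coe_le_coe_iff]
    have hσδ : σ * δ = ε := div_mul_cancel₀ ε hδ.ne'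
    nlinarith [hσδ]
  · rw [Filter.not_frequently] at hfreq
    obtain ⟨N, hN⟩ := eventually_atTop.1 hfreq
    have hmem : ∀ n : ℕ, T (n + N) ∈ Set.Icc (0:ℝ) σ := fun n =>
      ⟨(hT _).le, (not_le.1 (hN _ (Nat.le_add_left N n))).le⟩
    obtain ⟨t₀, ht₀mem, φ, hφmono, hφlim⟩ :=
      tendsto_subseq_of_bounded (Metric.isBounded_Icc (0:ℝ) σ) hmem
    rw [isClosed_Icc.closure_eq] at ht₀mem
    have hψtop : Tendsto (fun n => φ n + N) atTop atTop :=
      (tendsto_add_atTop_nat N).comp hφmono.tendsto_atTop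
    have hTψ : Tendsto (fun n => T (φ n + N)) atTop (𝓝 t₀) := by
      exact hφlim
    have hzlim : Tendsto (fun n => x + T (φ n + N) • (P (φ n + N)).1) atTop
        (𝓝 (x + t₀ • p.1)) :=
      tendsto_const_nhds.add (hTψ.smul (hw.comp hψtop))
    have halim : Tendsto
        (fun n => c - ε + T (φ n + N) * ((P (φ n + N)).2 + 1/(((φ n + N : ℕ) : ℝ)+1))) atTop
        (𝓝 (c - ε + t₀ * (p.2 + 0))) :=
      tendsto_const_nhds.add (hTψ.mul ((hs.comp hψtop).add (hδn.comp hψtop)))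
    have hfin := lsc_seq_bound hlsc hzlim halim (fun n => hTΦ (φ n + N))
    rcases eq_or_lt_of_le ht₀mem.1 with ht₀ | ht₀
    · exfalso
      rw [← ht₀, zero_smul, add_zero, hx] at hfin
      have : c ≤ c - ε + 0 * (p.2 + 0) := by exact_mod_cast hfin
      nlinarith
    · refine ⟨t₀, ht₀, hfin.trans ?_⟩
      rw [EReal.coe_le_coe_iff]
      nlinarith [ht₀, hδ]
end Four

section Five
variable {X : Type*} [NormedAddCommGroup X] [NormedSpace ℝ X]
variable {Φ : X → EReal} {x : X} {c ε : ℝ}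

lemma sep_aux (hbot : ∀ z, Φ z ≠ ⊥)
    (hconv : ∀ x y : X, ∀ t : ℝ, 0 ≤ t → t ≤ 1 →
      Φ (t • x + (1 - t) • y) ≤ ((t : ℝ) : EReal) * Φ x + (((1 - t : ℝ)) : EReal) * Φ y)
    (hlsc : LowerSemicontinuous Φ) (hx : Φ x = (c : EReal)) (hε : 0 < ε) {v : X} {r : ℝ}
    (hvr : (v, r) ∉ epiQ Φ x c ε) :
    ∃ (g : X →L[ℝ] ℝ) (β : ℝ), β ≤ 0 ∧ (∀ w s, (w, s) ∈ epiQ Φ x c ε → g w + s * β ≤ 0) ∧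
      0 < g v + r * β := by
  have hEc : Convex ℝ (epiQ Φ x c ε) := epiQ_convex hbot hconv
  have hEcl : IsClosed (epiQ Φ x c ε) := epiQ_closed hbot hconv hlsc hx hε
  obtain ⟨f, u, hfu, hfx⟩ := geometric_hahn_banach_closed_point hEc hEcl hvr
  set g : X →L[ℝ] ℝ := f.comp (ContinuousLinearMap.inl ℝ X ℝ) with hgdef
  set β : ℝ := f (0, 1) with hβdef
  have hdecomp : ∀ (w : X) (s : ℝ), f (w, s) = g w + s * β := by
    intro w s
    have hsplit : (w, s) = ((w, 0) : X × ℝ) + s • ((0 : X), (1 : ℝ)) := by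
      simp [Prod.ext_iff]
    rw [hsplit, map_add, map_smul, smul_eq_mul]
    rfl
  have hzero : ((0 : X), (0 : ℝ)) ∈ epiQ Φ x c ε := by
    show dirDeriv Φ x 0 c ε ≤ ((0:ℝ):EReal)
    exact dirDeriv_zero_le hbot hx hε
  have hu : 0 < u := by
    have h0 := hfu _ hzero
    rw [hdecomp] at h0
    simpa using h0
  have hle : ∀ w s, (w, s) ∈ epiQ Φ x c ε → g w + s * β ≤ 0 := by
    intro w s hws
    by_contra hpos
    push_neg at hpos
    set d := g w + s * β with hd
    have hl : 0 < (u + 1) / d := div_pos (by linarith) hpos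
    have hmem := epiQ_cone hbot hws hl
    have h1 := hfu _ hmem
    rw [hdecomp, map_smul, smul_eq_mul] at h1
    have h2 : (u + 1) / d * g w + ((u + 1) / d * s) * β = u + 1 := by
      linear_combination ((u + 1) / d) * hd.symm + div_mul_cancel₀ (u + 1) hpos.ne'
    rw [h2] at h1
    linarith
  have hone : ((0 : X), (1 : ℝ)) ∈ epiQ Φ x c ε := by
    show dirDeriv Φ x 0 c ε ≤ ((1:ℝ):EReal)
    exact (dirDeriv_zero_le hbot hx hε).trans (by exact_mod_cast zero_le_one)
  have hβle : β ≤ 0 := by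
    have := hle 0 1 hone
    simpa using this
  refine ⟨g, β, hβle, hle, ?_⟩
  have := hfx
  rw [hdecomp] at this
  linarith

end Five

section Six
variable {X : Type*} [NormedAddCommGroup X] [NormedSpace ℝ X]
variable {Φ : X → EReal} {x : X} {c ε : ℝ}

lemma exists_dominated (hbot : ∀ z, Φ z ≠ ⊥)
    (hconv : ∀ x y : X, ∀ t : ℝ, 0 ≤ t → t ≤ 1 →
      Φ (t • x + (1 - t) • y) ≤ ((t : ℝ) : EReal) * Φ x + (((1 - t : ℝ)) : EReal) * Φ y)
    (hlsc : LowerSemicontinuous Φ) (hx : Φ x = (c : EReal)) (hε : 0 < ε) :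
    ∃ p₀ : X →L[ℝ] ℝ, ∀ w s, (w, s) ∈ epiQ Φ x c ε → p₀ w ≤ s := by
  have hnot : ((0 : X), (-1 : ℝ)) ∉ epiQ Φ x c ε := by
    intro hmem
    have h2 : dirDeriv Φ x 0 c ε ≤ ((-1 : ℝ) : EReal) := hmem
    have h3 := (dirDeriv_zero_nonneg hbot hx hε).trans h2
    have h4 : (0:ℝ) ≤ -1 := by exact_mod_cast h3
    linarith
  obtain ⟨g, β, hβ, hle, hpos⟩ := sep_aux hbot hconv hlsc hx hε hnot
  have hβneg : β < 0 := by
    have h0 : g 0 + (-1) * β = 0 - β := by rw [map_zero]; ring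
    rw [h0] at hpos
    linarith
  have hnegβ : 0 < -β := neg_pos.2 hβneg
  refine ⟨(-β)⁻¹ • g, fun w s hws => ?_⟩
  have h1 := hle w s hws
  show (-β)⁻¹ * g w ≤ s
  rw [inv_mul_le_iff₀ hnegβ]
  nlinarith
lemma exists_subdiff (hbot : ∀ z, Φ z ≠ ⊥)
    (hconv : ∀ x y : X, ∀ t : ℝ, 0 ≤ t → t ≤ 1 →
      Φ (t • x + (1 - t) • y) ≤ ((t : ℝ) : EReal) * Φ x + (((1 - t : ℝ)) : EReal) * Φ y)
    (hlsc : LowerSemicontinuous Φ) (hx : Φ x = (c : EReal)) (hε : 0 < ε) {v : X} {r : ℝ}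
    (hr : (r : EReal) < dirDeriv Φ x v c ε) :
    ∃ p ∈ SubdiffAt Φ x ε, r ≤ p v := by
  have hnot : (v, r) ∉ epiQ Φ x c ε := by
    intro hmem
    exact absurd (show dirDeriv Φ x v c ε ≤ (r : EReal) from hmem) (not_le.2 hr)
  obtain ⟨g, β, hβ, hle, hpos⟩ := sep_aux hbot hconv hlsc hx hε hnot
  rcases hβ.lt_or_eq with hβneg | hβ0
  · have hnegβ : 0 < -β := neg_pos.2 hβneg
    refine ⟨(-β)⁻¹ • g, mem_subdiffAt_of hbot hx fun w s hws => ?_, ?_⟩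
    · have h1 := hle w s hws
      show (-β)⁻¹ * g w ≤ s
      rw [inv_mul_le_iff₀ hnegβ]
      nlinarith
    · show r ≤ (-β)⁻¹ * g v
      rw [le_inv_mul_iff₀ hnegβ]
      nlinarith
  · obtain ⟨p₀, hp₀⟩ := exists_dominated hbot hconv hlsc hx hε
    have hgle : ∀ w s, (w, s) ∈ epiQ Φ x c ε → g w ≤ 0 := fun w s h => by
      have := hle w s h; rw [hβ0] at this; simpa using this
    have hgv : 0 < g v := by
      have := hpos; rw [hβ0] at this; simpa using this
    obtain ⟨n, hn⟩ := exists_nat_ge ((r - p₀ v) / g v)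
    refine ⟨p₀ + (n : ℝ) • g, mem_subdiffAt_of hbot hx fun w s hws => ?_, ?_⟩
    · have h1 := hp₀ w s hws
      have h2 := hgle w s hws
      show p₀ w + (n : ℝ) * g w ≤ s
      nlinarith [Nat.cast_nonneg (α := ℝ) n]
    · show r ≤ p₀ v + (n : ℝ) * g v
      rw [div_le_iff₀ hgv] at hn
      linarith

theorem stmt1' [CompleteSpace X]
    (hproper : ∃ z, Φ z ≠ ⊤) (hbot : ∀ z, Φ z ≠ ⊥)
    (hconv : ∀ x y : X, ∀ t : ℝ, 0 ≤ t → t ≤ 1 →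
      Φ (t • x + (1 - t) • y) ≤ ((t : ℝ) : EReal) * Φ x + (((1 - t : ℝ)) : EReal) * Φ y)
    (hlsc : LowerSemicontinuous Φ)
    (v : X) (hx : Φ x = (c : EReal)) (hε : 0 < ε) :
    dirDeriv Φ x v c ε = ⨆ p ∈ SubdiffAt Φ x ε, ((p v : ℝ) : EReal) := by
  refine le_antisymm ?_ (iSup₂_le fun p hp => coe_apply_le_dirDeriv hbot hx hp v)
  by_contra hlt
  push_neg at hlt
  obtain ⟨r, hr1, hr2⟩ := EReal.exists_between_coe_real hlt
  obtain ⟨p, hp, hrp⟩ := exists_subdiff hbot hconv hlsc hx hε hr2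
  have h1 : ((r : ℝ) : EReal) ≤ ⨆ p ∈ SubdiffAt Φ x ε, ((p v : ℝ) : EReal) :=
    le_trans (by exact_mod_cast hrp) (le_biSup (fun p => ((p v : ℝ) : EReal)) hp)
  exact absurd (h1.trans_lt hr1) (lt_irrefl _)
end Six

theorem stmt1 {X : Type*} [NormedAddCommGroup X] [NormedSpace ℝ X] [CompleteSpace X]
    (Φ : X → EReal)
    (hproper : ∃ z, Φ z ≠ ⊤) (hbot : ∀ z, Φ z ≠ ⊥)
    (hconv : ∀ x y : X, ∀ t : ℝ, 0 ≤ t → t ≤ 1 →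
      Φ (t • x + (1 - t) • y) ≤ ((t : ℝ) : EReal) * Φ x + (((1 - t : ℝ)) : EReal) * Φ y)
    (hlsc : LowerSemicontinuous Φ)
    (x v : X) (c : ℝ) (hx : Φ x = (c : EReal))
    (ε : ℝ) (hε : 0 < ε) :
    dirDeriv Φ x v c ε = ⨆ p ∈ SubdiffAt Φ x ε, ((p v : ℝ) : EReal) := by
  exact stmt1' hproper hbot hconv hlsc v hx hε
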